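/- Let d ≥ 4 and let 𝕊_{d,3} be the space of symmetric real d×d matrices with zero diagonal and all row sums zero. Then: (i) the only matrix in 𝕊_{d,3} fixed by P_σ (·) P_σᵀ for all σ ∈ S_{d−1}×S_1 (permutations fixing index d) is the zero matrix; (ii) a matrix S ∈ 𝕊_{d,3} is fixed by P_σ (·) P_σᵀ for all σ ∈ S_{d−2}×S_1×S_1 (permutations fixing indices d−1 and d) if and only if there exists α ∈ ℝ with S_{ij} = 2α/((d−2)(d−3)) for all distinct i, j ≤ d−2, S_{i,d−1} = S_{i,d} = −α/(d−2) for all i ≤ d−2, S_{d−1,d} = α, S symmetric with zero diagonal; in particular 𝕊_{d,3} ∩ M(d,d)^{S_{d−2}×S_1×S_1} is one-dimensional. -/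

import Mathlib

open Matrix

/-- The permutation matrix of `σ`. -/
def permMat {d : ℕ} (σ : Equiv.Perm (Fin d)) : Matrix (Fin d) (Fin d) ℝ :=
  Matrix.of fun i j => if σ j = i then (1 : ℝ) else 0

/-- The fixed-point space of a set `G` of permutations for the diagonal action
`W ↦ P_σ W P_σᵀ` on `d × d` matrices. -/
def fixedSpace {d : ℕ} (G : Set (Equiv.Perm (Fin d))) :
    Submodule ℝ (Matrix (Fin d) (Fin d) ℝ) where
  carrier := {W | ∀ σ ∈ G, permMat σ * W * (permMat σ)ᵀ = W}
  zero_mem' := by intro σ _; simp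
  add_mem' := by
    intro a b ha hb σ hσ
    rw [Matrix.mul_add, Matrix.add_mul, ha σ hσ, hb σ hσ]
  smul_mem' := by
    intro c a ha σ hσ
    rw [Matrix.mul_smul, Matrix.smul_mul, ha σ hσ]

/-- `𝕊_{d,3}`: symmetric matrices with zero diagonal and all row sums zero. -/
def Sd3 (d : ℕ) : Submodule ℝ (Matrix (Fin d) (Fin d) ℝ) where
  carrier := {A | Aᵀ = A ∧ (∀ i, A i i = 0) ∧ ∀ i, ∑ j, A i j = 0}
  zero_mem' := ⟨by simp, fun i => rfl, by simp⟩
  add_mem' := by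
    rintro a b ⟨ha1, ha2, ha3⟩ ⟨hb1, hb2, hb3⟩
    refine ⟨by rw [Matrix.transpose_add, ha1, hb1], fun i => ?_, fun i => ?_⟩
    · simp [Matrix.add_apply, ha2 i, hb2 i]
    · simp [Matrix.add_apply, Finset.sum_add_distrib, ha3 i, hb3 i]
  smul_mem' := by
    rintro c a ⟨ha1, ha2, ha3⟩
    refine ⟨by rw [Matrix.transpose_smul, ha1], fun i => ?_, fun i => ?_⟩
    · simp [Matrix.smul_apply, ha2 i]
    · simp [Matrix.smul_apply, ← Finset.mul_sum, ha3 i]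

lemma permMat_conj_apply {d : ℕ} (σ : Equiv.Perm (Fin d)) (S : Matrix (Fin d) (Fin d) ℝ)
    (i j : Fin d) :
    (permMat σ * S * (permMat σ)ᵀ) i j = S (σ⁻¹ i) (σ⁻¹ j) := by
  have h1 : ∀ (x : Fin d) (f : Fin d → ℝ),
      (∑ k, (if σ k = x then (1:ℝ) else 0) * f k) = f (σ⁻¹ x) := by
    intro x f
    rw [Finset.sum_eq_single (σ⁻¹ x)]
    · simp
    · intro k _ hk
      rw [if_neg, zero_mul]
      intro hc; exact hk (by rw [← hc]; simp)
    · simp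
  have h2 : ∀ (x : Fin d) (f : Fin d → ℝ),
      (∑ k, f k * (if σ k = x then (1:ℝ) else 0)) = f (σ⁻¹ x) := by
    intro x f
    rw [Finset.sum_eq_single (σ⁻¹ x)]
    · simp
    · intro k _ hk
      rw [if_neg, mul_zero]
      intro hc; exact hk (by rw [← hc]; simp)
    · simp
  simp only [Matrix.mul_apply, Matrix.transpose_apply, permMat, Matrix.of_apply]
  rw [h2 j (fun l => ∑ k, (if σ k = i then (1:ℝ) else 0) * S k l), h1]

lemma exists_perm_pair {d : ℕ} (p q i₀ j₀ i j : Fin d)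
    (hij₀ : i₀ ≠ j₀) (hij : i ≠ j)
    (h1 : i₀ ≠ p) (h2 : i₀ ≠ q) (h3 : j₀ ≠ p) (h4 : j₀ ≠ q)
    (h5 : i ≠ p) (h6 : i ≠ q) (h7 : j ≠ p) (h8 : j ≠ q) :
    ∃ σ : Equiv.Perm (Fin d), σ p = p ∧ σ q = q ∧ σ i₀ = i ∧ σ j₀ = j := by
  set σ₁ := Equiv.swap i₀ i with hσ₁
  set j₁ := σ₁ j with hj₁def
  have hσ₁j₁ : σ₁ j₁ = j := Equiv.swap_apply_self _ _ _
  have hσ₁p : σ₁ p = p := Equiv.swap_apply_of_ne_of_ne (Ne.symm h1) (Ne.symm h5)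
  have hσ₁q : σ₁ q = q := Equiv.swap_apply_of_ne_of_ne (Ne.symm h2) (Ne.symm h6)
  have hj₁p : j₁ ≠ p := fun hc => h7 (by rw [← hσ₁j₁, hc, hσ₁p])
  have hj₁q : j₁ ≠ q := fun hc => h8 (by rw [← hσ₁j₁, hc, hσ₁q])
  have hj₁i₀ : j₁ ≠ i₀ := fun hc => hij (by
    rw [← hσ₁j₁, hc, hσ₁, Equiv.swap_apply_left])
  refine ⟨σ₁ * Equiv.swap j₀ j₁, ?_, ?_, ?_, ?_⟩
  · simp only [Equiv.Perm.mul_apply]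
    rw [Equiv.swap_apply_of_ne_of_ne (Ne.symm h3) (Ne.symm hj₁p), hσ₁p]
  · simp only [Equiv.Perm.mul_apply]
    rw [Equiv.swap_apply_of_ne_of_ne (Ne.symm h4) (Ne.symm hj₁q), hσ₁q]
  · simp only [Equiv.Perm.mul_apply]
    rw [Equiv.swap_apply_of_ne_of_ne hij₀ (Ne.symm hj₁i₀), hσ₁, Equiv.swap_apply_left]
  · simp only [Equiv.Perm.mul_apply]
    rw [Equiv.swap_apply_left, hσ₁j₁]

lemma sum_three {d : ℕ} (u v w : Fin d) (A x y z : ℝ) :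
    ∑ j : Fin d, (A + (if j = u then x else 0) + (if j = v then y else 0)
      + (if j = w then z else 0)) = d * A + x + y + z := by
  simp [Finset.sum_add_distrib, Finset.sum_ite_eq', mul_comm]

noncomputable def Mmat (d : ℕ) (hd : 4 ≤ d) (α : ℝ) : Matrix (Fin d) (Fin d) ℝ :=
  Matrix.of fun i j : Fin d =>
    if i = j then (0 : ℝ)
    else if (i = ⟨d - 2, Nat.sub_lt_self (by omega) (by omega)⟩ ∧ j = ⟨d - 1, Nat.sub_lt_self (by omega) (by omega)⟩) ∨
      (i = ⟨d - 1, Nat.sub_lt_self (by omega) (by omega)⟩ ∧ j = ⟨d - 2, Nat.sub_lt_self (by omega) (by omega)⟩) then α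
    else if i = ⟨d - 2, Nat.sub_lt_self (by omega) (by omega)⟩ ∨ i = ⟨d - 1, Nat.sub_lt_self (by omega) (by omega)⟩ ∨
      j = ⟨d - 2, Nat.sub_lt_self (by omega) (by omega)⟩ ∨ j = ⟨d - 1, Nat.sub_lt_self (by omega) (by omega)⟩ then -α / ((d : ℝ) - 2)
    else 2 * α / (((d : ℝ) - 2) * ((d : ℝ) - 3))

lemma orsw (a b c e : Prop) : ((a ∧ b) ∨ (c ∧ e)) ↔ ((e ∧ c) ∨ (b ∧ a)) := by tauto
lemma orrot (a b c e : Prop) : (a ∨ b ∨ c ∨ e) ↔ (c ∨ e ∨ a ∨ b) := by tauto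

section
variable {d : ℕ} (hd : 4 ≤ d)

lemma Mmat_symm (α : ℝ) : (Mmat d hd α)ᵀ = Mmat d hd α := by
  ext i j
  simp only [Mmat, transpose_apply, of_apply]
  rw [if_congr (eq_comm) rfl rfl, if_congr (orsw _ _ _ _) rfl rfl,
    if_congr (orrot _ _ _ _) rfl rfl]

lemma Mmat_smul (α : ℝ) : Mmat d hd α = α • Mmat d hd 1 := by
  ext i j
  simp only [Mmat, Matrix.smul_apply, of_apply, smul_eq_mul]
  split_ifs <;> ring
end

section
variable {d : ℕ} (hd : 4 ≤ d) (α : ℝ)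

lemma Mmat_pq : Mmat d hd α ⟨d - 2, Nat.sub_lt_self (by omega) (by omega)⟩ ⟨d - 1, Nat.sub_lt_self (by omega) (by omega)⟩ = α := by
  have : (⟨d - 2, Nat.sub_lt_self (by omega) (by omega)⟩ : Fin d) ≠ ⟨d - 1, Nat.sub_lt_self (by omega) (by omega)⟩ := by
    simp only [ne_eq, Fin.mk.injEq]; omega
  simp [Mmat, this]

lemma Mmat_qp : Mmat d hd α ⟨d - 1, Nat.sub_lt_self (by omega) (by omega)⟩ ⟨d - 2, Nat.sub_lt_self (by omega) (by omega)⟩ = α := by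
  have : (⟨d - 1, Nat.sub_lt_self (by omega) (by omega)⟩ : Fin d) ≠ ⟨d - 2, Nat.sub_lt_self (by omega) (by omega)⟩ := by
    simp only [ne_eq, Fin.mk.injEq]; omega
  simp [Mmat, this]

lemma Mmat_diag (i : Fin d) : Mmat d hd α i i = 0 := by simp [Mmat]

lemma Mmat_edge (i j : Fin d) (hij : i ≠ j)
    (h : (i = ⟨d - 2, Nat.sub_lt_self (by omega) (by omega)⟩ ∨ i = ⟨d - 1, Nat.sub_lt_self (by omega) (by omega)⟩ ∨
      j = ⟨d - 2, Nat.sub_lt_self (by omega) (by omega)⟩ ∨ j = ⟨d - 1, Nat.sub_lt_self (by omega) (by omega)⟩))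
    (hnp : ¬((i = ⟨d - 2, Nat.sub_lt_self (by omega) (by omega)⟩ ∧ j = ⟨d - 1, Nat.sub_lt_self (by omega) (by omega)⟩) ∨
      (i = ⟨d - 1, Nat.sub_lt_self (by omega) (by omega)⟩ ∧ j = ⟨d - 2, Nat.sub_lt_self (by omega) (by omega)⟩))) :
    Mmat d hd α i j = -α / ((d : ℝ) - 2) := by
  simp only [Mmat, of_apply, if_neg hij, if_neg hnp, if_pos h]

lemma Mmat_gen (i j : Fin d) (hij : i ≠ j)
    (h1 : i ≠ ⟨d - 2, Nat.sub_lt_self (by omega) (by omega)⟩) (h2 : i ≠ ⟨d - 1, Nat.sub_lt_self (by omega) (by omega)⟩)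
    (h3 : j ≠ ⟨d - 2, Nat.sub_lt_self (by omega) (by omega)⟩) (h4 : j ≠ ⟨d - 1, Nat.sub_lt_self (by omega) (by omega)⟩) :
    Mmat d hd α i j = 2 * α / (((d : ℝ) - 2) * ((d : ℝ) - 3)) := by
  simp only [Mmat, of_apply, if_neg hij]
  rw [if_neg (by tauto), if_neg (by tauto)]

lemma Mmat_rowsum (i : Fin d) : ∑ j, Mmat d hd α i j = 0 := by
  set p : Fin d := ⟨d - 2, Nat.sub_lt_self (by omega) (by omega)⟩ with hp
  set q : Fin d := ⟨d - 1, Nat.sub_lt_self (by omega) (by omega)⟩ with hq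
  have hpq : p ≠ q := by simp only [hp, hq, ne_eq, Fin.mk.injEq]; omega
  have hd4 : (4:ℝ) ≤ (d:ℝ) := by exact_mod_cast hd
  have h2 : (d:ℝ) - 2 ≠ 0 := by linarith
  have h3 : (d:ℝ) - 3 ≠ 0 := by linarith
  by_cases hip : i = p
  · have key : ∀ j, Mmat d hd α i j = -α/((d:ℝ)-2) + (if j = p then α/((d:ℝ)-2) else 0)
        + (if j = q then α + α/((d:ℝ)-2) else 0) + (if j = p then 0 else 0) := by
      intro j
      by_cases hjp : j = p
      · rw [hjp, hip, Mmat_diag]; simp [hpq]; ring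
      · by_cases hjq : j = q
        · rw [hip, hjq, Mmat_pq]; simp [hpq, Ne.symm hpq, Ne.symm hjp]; ring
        · rw [Mmat_edge hd α i j (by rw [hip]; exact fun hc => hjp hc.symm)
            (by left; exact hip) (by rw [hip]; tauto)]
          simp [hjp, hjq]
    rw [Finset.sum_congr rfl (fun j _ => key j), sum_three]
    push_cast
    field_simp
    ring
  · by_cases hiq : i = q
    · have key : ∀ j, Mmat d hd α i j = -α/((d:ℝ)-2) + (if j = q then α/((d:ℝ)-2) else 0)
          + (if j = p then α + α/((d:ℝ)-2) else 0) + (if j = p then 0 else 0) := by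
        intro j
        by_cases hjq : j = q
        · rw [hjq, hiq, Mmat_diag]; simp [Ne.symm hpq]; ring -- A
        · by_cases hjp : j = p
          · rw [hiq, hjp, Mmat_qp]; simp [hjq, hpq]; ring
          · rw [Mmat_edge hd α i j (by rw [hiq]; exact fun hc => hjq hc.symm)
              (by right; left; exact hiq) (by rw [hiq]; simp [hjp, Ne.symm hpq, ← hp, ← hq])]
            simp [hjp, hjq]
      rw [Finset.sum_congr rfl (fun j _ => key j), sum_three]
      push_cast
      field_simp
      ring
    · set A : ℝ := 2 * α / (((d : ℝ) - 2) * ((d : ℝ) - 3)) with hA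
      set B : ℝ := -α / ((d : ℝ) - 2) with hB
      have key : ∀ j, Mmat d hd α i j = A + (if j = i then -A else 0)
          + (if j = p then B - A else 0) + (if j = q then B - A else 0) := by
        intro j
        by_cases hji : j = i
        · rw [hji, Mmat_diag, if_pos rfl, if_neg hip, if_neg hiq]; ring
        · by_cases hjp : j = p
          · subst hjp
            rw [Mmat_edge hd α i p hip (Or.inr (Or.inr (Or.inl rfl)))
              (by simp [hip, hiq, ← hp, ← hq]), if_neg hji, if_pos rfl, if_neg hpq, hB]
            ring
          · by_cases hjq : j = q
            · subst hjq
              rw [Mmat_edge hd α i q hiq (Or.inr (Or.inr (Or.inr rfl)))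
                (by simp [hip, hiq, ← hp, ← hq]), if_neg hji, if_neg (Ne.symm hpq), if_pos rfl, hB]
              ring
            · rw [Mmat_gen hd α i j (fun hc => hji hc.symm) hip hiq hjp hjq,
                if_neg hji, if_neg hjp, if_neg hjq, hA]
              ring
      rw [Finset.sum_congr rfl (fun j _ => key j), sum_three, hA, hB]
      field_simp
      ring
end

lemma inv_pointwise {d : ℕ} (σ : Equiv.Perm (Fin d)) (S : Matrix (Fin d) (Fin d) ℝ)
    (h : permMat σ * S * (permMat σ)ᵀ = S) (i j : Fin d) : S (σ i) (σ j) = S i j := by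
  have h2 := permMat_conj_apply σ S (σ i) (σ j)
  rw [h] at h2
  simpa using h2

set_option maxHeartbeats 1000000 in
lemma structure_lemma {d : ℕ} (hd : 4 ≤ d) (S : Matrix (Fin d) (Fin d) ℝ)
    (hsym : Sᵀ = S) (hdiag : ∀ i, S i i = 0) (hrow : ∀ i, ∑ j, S i j = 0)
    (hinv : ∀ σ : Equiv.Perm (Fin d), σ ⟨d - 2, Nat.sub_lt_self (by omega) (by omega)⟩ = ⟨d - 2, Nat.sub_lt_self (by omega) (by omega)⟩ →
      σ ⟨d - 1, Nat.sub_lt_self (by omega) (by omega)⟩ = ⟨d - 1, Nat.sub_lt_self (by omega) (by omega)⟩ → permMat σ * S * (permMat σ)ᵀ = S) :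
    S = Mmat d hd (S ⟨d - 2, Nat.sub_lt_self (by omega) (by omega)⟩ ⟨d - 1, Nat.sub_lt_self (by omega) (by omega)⟩) := by
  set p : Fin d := ⟨d - 2, Nat.sub_lt_self (by omega) (by omega)⟩ with hp
  set q : Fin d := ⟨d - 1, Nat.sub_lt_self (by omega) (by omega)⟩ with hq
  set i₀ : Fin d := ⟨0, by omega⟩ with hi₀
  set j₀ : Fin d := ⟨1, by omega⟩ with hj₀
  have hpq : p ≠ q := by simp only [hp, hq, ne_eq, Fin.mk.injEq]; omega
  have hi₀j₀ : i₀ ≠ j₀ := by simp only [hi₀, hj₀, ne_eq, Fin.mk.injEq]; omega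
  have hi₀p : i₀ ≠ p := by simp only [hi₀, hp, ne_eq, Fin.mk.injEq]; omega
  have hi₀q : i₀ ≠ q := by simp only [hi₀, hq, ne_eq, Fin.mk.injEq]; omega
  have hj₀p : j₀ ≠ p := by simp only [hj₀, hp, ne_eq, Fin.mk.injEq]; omega
  have hj₀q : j₀ ≠ q := by simp only [hj₀, hq, ne_eq, Fin.mk.injEq]; omega
  have hd4 : (4:ℝ) ≤ (d:ℝ) := by exact_mod_cast hd
  have hc2 : (d:ℝ) - 2 ≠ 0 := by linarith
  have hc3 : (d:ℝ) - 3 ≠ 0 := by linarith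
  have hsym' : ∀ i j, S j i = S i j := fun i j => congrFun (congrFun hsym i) j
  have hmove : ∀ σ : Equiv.Perm (Fin d), σ p = p → σ q = q →
      ∀ i j, S (σ i) (σ j) = S i j :=
    fun σ h1 h2 i j => inv_pointwise σ S (hinv σ h1 h2) i j
  have hA : ∀ i j, i ≠ j → i ≠ p → i ≠ q → j ≠ p → j ≠ q → S i j = S i₀ j₀ := by
    intro i j hij hip hiq hjp hjq
    obtain ⟨σ, h1, h2, h3, h4⟩ := exists_perm_pair p q i₀ j₀ i j hi₀j₀ hij
      hi₀p hi₀q hj₀p hj₀q hip hiq hjp hjq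
    have h5 := hmove σ h1 h2 i₀ j₀
    rw [h3, h4] at h5
    exact h5
  have hBp : ∀ i, i ≠ p → i ≠ q → S i p = S i₀ p := by
    intro i hip hiq
    have h1 : Equiv.swap i₀ i p = p :=
      Equiv.swap_apply_of_ne_of_ne (Ne.symm hi₀p) (Ne.symm hip)
    have h2 : Equiv.swap i₀ i q = q :=
      Equiv.swap_apply_of_ne_of_ne (Ne.symm hi₀q) (Ne.symm hiq)
    have h3 := hmove _ h1 h2 i₀ p
    rw [Equiv.swap_apply_left, h1] at h3
    exact h3
  have hBq : ∀ i, i ≠ p → i ≠ q → S i q = S i₀ q := by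
    intro i hip hiq
    have h1 : Equiv.swap i₀ i p = p :=
      Equiv.swap_apply_of_ne_of_ne (Ne.symm hi₀p) (Ne.symm hip)
    have h2 : Equiv.swap i₀ i q = q :=
      Equiv.swap_apply_of_ne_of_ne (Ne.symm hi₀q) (Ne.symm hiq)
    have h3 := hmove _ h1 h2 i₀ q
    rw [Equiv.swap_apply_left, h2] at h3
    exact h3
  have keyp : ∀ j, S p j = S i₀ p + (if j = p then -S i₀ p else 0)
      + (if j = q then S p q - S i₀ p else 0) + (if j = p then 0 else 0) := by
    intro j
    by_cases hjp : j = p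
    · subst hjp
      rw [hdiag, if_pos rfl, if_neg hpq, if_pos rfl]; ring
    · by_cases hjq : j = q
      · subst hjq
        rw [if_neg (Ne.symm hpq), if_pos rfl, if_neg (Ne.symm hpq)]; ring
      · rw [hsym' j p, hBp j hjp hjq, if_neg hjp, if_neg hjq, if_neg hjp]; ring
  have keyq : ∀ j, S q j = S i₀ q + (if j = q then -S i₀ q else 0)
      + (if j = p then S p q - S i₀ q else 0) + (if j = q then 0 else 0) := by
    intro j
    by_cases hjq : j = q
    · subst hjq
      rw [hdiag, if_pos rfl, if_neg (Ne.symm hpq), if_pos rfl]; ring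
    · by_cases hjp : j = p
      · subst hjp
        rw [hsym' p q, if_neg hpq, if_pos rfl, if_neg hpq]; ring
      · rw [hsym' j q, hBq j hjp hjq, if_neg hjq, if_neg hjp, if_neg hjq]; ring
  have key0 : ∀ j, S i₀ j = S i₀ j₀ + (if j = i₀ then -S i₀ j₀ else 0)
      + (if j = p then S i₀ p - S i₀ j₀ else 0)
      + (if j = q then S i₀ q - S i₀ j₀ else 0) := by
    intro j
    by_cases hji : j = i₀
    · subst hji
      rw [hdiag, if_pos rfl, if_neg hi₀p, if_neg hi₀q]; ring
    · by_cases hjp : j = p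
      · subst hjp
        rw [if_neg (fun hcc => hi₀p hcc.symm), if_pos rfl, if_neg hpq]; ring
      · by_cases hjq : j = q
        · subst hjq
          rw [if_neg (fun hcc => hi₀q hcc.symm), if_neg (Ne.symm hpq), if_pos rfl]
          ring
        · rw [hA i₀ j (fun hcc => hji hcc.symm) hi₀p hi₀q hjp hjq,
            if_neg hji, if_neg hjp, if_neg hjq]; ring
  have ep : ∑ j, S p j = (d:ℝ) * S i₀ p + -S i₀ p + (S p q - S i₀ p) + 0 := by
    rw [Finset.sum_congr rfl (fun j _ => keyp j), sum_three]
  have eq' : ∑ j, S q j = (d:ℝ) * S i₀ q + -S i₀ q + (S p q - S i₀ q) + 0 := by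
    rw [Finset.sum_congr rfl (fun j _ => keyq j), sum_three]
  have e0 : ∑ j, S i₀ j = (d:ℝ) * S i₀ j₀ + -S i₀ j₀ + (S i₀ p - S i₀ j₀)
      + (S i₀ q - S i₀ j₀) := by
    rw [Finset.sum_congr rfl (fun j _ => key0 j), sum_three]
  have eqp : (d:ℝ) * S i₀ p + -S i₀ p + (S p q - S i₀ p) + 0 = 0 := by
    rw [← ep]; exact hrow p
  have eqq : (d:ℝ) * S i₀ q + -S i₀ q + (S p q - S i₀ q) + 0 = 0 := by
    rw [← eq']; exact hrow q
  have eq0 : (d:ℝ) * S i₀ j₀ + -S i₀ j₀ + (S i₀ p - S i₀ j₀) + (S i₀ q - S i₀ j₀) = 0 := by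
    rw [← e0]; exact hrow i₀
  have E1 : ((d:ℝ) - 2) * S i₀ p + S p q = 0 := by linarith [eqp]
  have E1' : ((d:ℝ) - 2) * S i₀ q + S p q = 0 := by linarith [eqq]
  have hbb : S i₀ p = S i₀ q := by
    have h : ((d:ℝ) - 2) * (S i₀ p - S i₀ q) = 0 := by linarith [E1, E1']
    rcases mul_eq_zero.mp h with h | h
    · exact absurd h hc2
    · linarith [sub_eq_zero.mp h]
  have E2 : ((d:ℝ) - 3) * S i₀ j₀ + 2 * S i₀ p = 0 := by linarith [eq0, hbb]
  have hbval : S i₀ p = -S p q / ((d:ℝ) - 2) := by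
    field_simp; linear_combination E1
  have haval : S i₀ j₀ = 2 * S p q / (((d:ℝ) - 2) * ((d:ℝ) - 3)) := by
    field_simp; linear_combination ((d:ℝ) - 2) * E2 - 2 * E1
  ext i j
  by_cases hij : i = j
  · subst hij; rw [Mmat_diag, hdiag]
  · by_cases hP : (i = p ∧ j = q) ∨ (i = q ∧ j = p)
    · rcases hP with ⟨h1, h2⟩ | ⟨h1, h2⟩
      · subst h1; subst h2; rw [Mmat_pq]
      · subst h1; subst h2; rw [Mmat_qp, hsym']
    · by_cases hE : i = p ∨ i = q ∨ j = p ∨ j = q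
      · rw [Mmat_edge hd (S p q) i j hij hE hP, ← hbval]
        rcases hE with h | h | h | h
        · subst h
          have hjp : j ≠ p := fun hcc => hij hcc.symm
          have hjq : j ≠ q := fun hcc => hP (Or.inl ⟨rfl, hcc⟩)
          rw [hsym' j p]; exact hBp j hjp hjq
        · subst h
          have hjq : j ≠ q := fun hcc => hij hcc.symm
          have hjp : j ≠ p := fun hcc => hP (Or.inr ⟨rfl, hcc⟩)
          rw [hsym' j q, hbb]; exact hBq j hjp hjq
        · subst h
          have hip : i ≠ p := hij
          have hiq : i ≠ q := fun hcc => hP (Or.inr ⟨hcc, rfl⟩)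
          exact hBp i hip hiq
        · subst h
          have hiq : i ≠ q := hij
          have hip : i ≠ p := fun hcc => hP (Or.inl ⟨hcc, rfl⟩)
          rw [hbb]; exact hBq i hip hiq
      · push_neg at hE
        obtain ⟨h1, h2, h3, h4⟩ := hE
        rw [Mmat_gen hd (S p q) i j hij h1 h2 h3 h4, ← haval]
        exact hA i j hij h1 h2 h3 h4

lemma Mmat_invariant {d : ℕ} (hd : 4 ≤ d) (α : ℝ) (σ : Equiv.Perm (Fin d))
    (hp : σ ⟨d - 2, Nat.sub_lt_self (by omega) (by omega)⟩ = ⟨d - 2, Nat.sub_lt_self (by omega) (by omega)⟩)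
    (hq : σ ⟨d - 1, Nat.sub_lt_self (by omega) (by omega)⟩ = ⟨d - 1, Nat.sub_lt_self (by omega) (by omega)⟩) :
    permMat σ * Mmat d hd α * (permMat σ)ᵀ = Mmat d hd α := by
  have h1 : d - 2 < d := by omega
  have h2 : d - 1 < d := by omega
  have hp' : σ ⟨d - 2, h1⟩ = ⟨d - 2, h1⟩ := hp
  have hq' : σ ⟨d - 1, h2⟩ = ⟨d - 1, h2⟩ := hq
  clear hp hq
  ext i j
  rw [permMat_conj_apply]
  have e1 : (σ⁻¹ i = σ⁻¹ j) ↔ (i = j) := EmbeddingLike.apply_eq_iff_eq σ⁻¹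
  have eip : (σ⁻¹ i = ⟨d - 2, h1⟩) ↔ (i = ⟨d - 2, h1⟩) := by
    rw [Equiv.Perm.inv_eq_iff_eq, hp']
  have eiq : (σ⁻¹ i = ⟨d - 1, h2⟩) ↔ (i = ⟨d - 1, h2⟩) := by
    rw [Equiv.Perm.inv_eq_iff_eq, hq']
  have ejp : (σ⁻¹ j = ⟨d - 2, h1⟩) ↔ (j = ⟨d - 2, h1⟩) := by
    rw [Equiv.Perm.inv_eq_iff_eq, hp']
  have ejq : (σ⁻¹ j = ⟨d - 1, h2⟩) ↔ (j = ⟨d - 1, h2⟩) := by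
    rw [Equiv.Perm.inv_eq_iff_eq, hq']
  simp only [Mmat, Matrix.of_apply]
  simp only [e1, eip, eiq, ejp, ejq]

lemma Mmat_mem_Sd3 {d : ℕ} (hd : 4 ≤ d) (α : ℝ) : Mmat d hd α ∈ Sd3 d :=
  ⟨Mmat_symm hd α, fun i => Mmat_diag hd α i, fun i => Mmat_rowsum hd α i⟩

/-- for `d ≥ 4`: (i) the only matrix of `𝕊_{d,3}` fixed by all
permutations fixing the last index is zero; (ii) the matrices of `𝕊_{d,3}` fixed by
all permutations fixing the last two indices are exactly the explicit one-parameter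
family described, so that `𝕊_{d,3} ∩ M(d,d)^{S_{d−2}×S_1×S_1}` is one-dimensional. -/
theorem Sd3_fixed_vectors (d : ℕ) (hd : 4 ≤ d) :
    (∀ S ∈ Sd3 d,
      (∀ σ : Equiv.Perm (Fin d), σ ⟨d - 1, by omega⟩ = ⟨d - 1, by omega⟩ →
        permMat σ * S * (permMat σ)ᵀ = S) → S = 0) ∧
    (∀ S ∈ Sd3 d,
      ((∀ σ : Equiv.Perm (Fin d), σ ⟨d - 2, by omega⟩ = ⟨d - 2, by omega⟩ →
          σ ⟨d - 1, by omega⟩ = ⟨d - 1, by omega⟩ →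
          permMat σ * S * (permMat σ)ᵀ = S) ↔
        ∃ α : ℝ, S = Matrix.of fun i j : Fin d =>
          if i = j then (0 : ℝ)
          else if (i = ⟨d - 2, by omega⟩ ∧ j = ⟨d - 1, by omega⟩) ∨
            (i = ⟨d - 1, by omega⟩ ∧ j = ⟨d - 2, by omega⟩) then α
          else if i = ⟨d - 2, by omega⟩ ∨ i = ⟨d - 1, by omega⟩ ∨
            j = ⟨d - 2, by omega⟩ ∨ j = ⟨d - 1, by omega⟩ then -α / ((d : ℝ) - 2)
          else 2 * α / (((d : ℝ) - 2) * ((d : ℝ) - 3)))) ∧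
    Module.finrank ℝ
      ↥(Sd3 d ⊓ fixedSpace {σ : Equiv.Perm (Fin d) |
          σ ⟨d - 2, by omega⟩ = ⟨d - 2, by omega⟩ ∧
          σ ⟨d - 1, by omega⟩ = ⟨d - 1, by omega⟩}) = 1 := by
  have hd4 : (4:ℝ) ≤ (d:ℝ) := by exact_mod_cast hd
  have hpq : (⟨d - 2, by omega⟩ : Fin d) ≠ ⟨d - 1, by omega⟩ := by
    simp only [ne_eq, Fin.mk.injEq]; omega
  have hi₀p : (⟨0, by omega⟩ : Fin d) ≠ ⟨d - 2, by omega⟩ := by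
    simp only [ne_eq, Fin.mk.injEq]; omega
  have hi₀q : (⟨0, by omega⟩ : Fin d) ≠ ⟨d - 1, by omega⟩ := by
    simp only [ne_eq, Fin.mk.injEq]; omega
  refine ⟨?_, ?_, ?_⟩
  · -- part (i)
    rintro S ⟨hsym, hdiag, hrow⟩ H
    have hS := structure_lemma hd S hsym hdiag hrow (fun σ h1 h2 => H σ h2)
    -- use the swap of p and 0
    set σ₀ : Equiv.Perm (Fin d) := Equiv.swap ⟨d - 2, by omega⟩ ⟨0, by omega⟩ with hσ₀
    have hσ₀q : σ₀ ⟨d - 1, by omega⟩ = ⟨d - 1, by omega⟩ :=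
      Equiv.swap_apply_of_ne_of_ne (Ne.symm hpq) (Ne.symm hi₀q)
    have h1 := inv_pointwise σ₀ S (H σ₀ hσ₀q) ⟨d - 2, by omega⟩ ⟨d - 1, by omega⟩
    rw [hσ₀q, hσ₀, Equiv.swap_apply_left] at h1
    -- h1 : S i₀ q = S p q
    rw [hS] at h1
    rw [Mmat_edge hd _ _ _ hi₀q (Or.inr (Or.inr (Or.inr rfl)))
      (by simp [hi₀p, hi₀q]), Mmat_pq] at h1
    have hc2 : (d:ℝ) - 2 ≠ 0 := by linarith
    have hα : S ⟨d - 2, by omega⟩ ⟨d - 1, by omega⟩ = 0 := by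
      have h2 : -(S ⟨d - 2, by omega⟩ ⟨d - 1, by omega⟩)
          = ((d:ℝ) - 2) * S ⟨d - 2, by omega⟩ ⟨d - 1, by omega⟩ := by
        field_simp at h1
        linarith [h1]
      nlinarith [h2]
    rw [hS, hα, Mmat_smul, zero_smul]
  · -- part (ii)
    rintro S ⟨hsym, hdiag, hrow⟩
    constructor
    · intro H
      exact ⟨S ⟨d - 2, by omega⟩ ⟨d - 1, by omega⟩, structure_lemma hd S hsym hdiag hrow H⟩
    · rintro ⟨α, hα⟩ σ h1 h2
      have hα' : S = Mmat d hd α := hα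
      rw [hα']
      exact Mmat_invariant hd α σ h1 h2
  · -- part (iii)
    have key : Sd3 d ⊓ fixedSpace {σ : Equiv.Perm (Fin d) |
          σ ⟨d - 2, by omega⟩ = ⟨d - 2, by omega⟩ ∧
          σ ⟨d - 1, by omega⟩ = ⟨d - 1, by omega⟩}
        = Submodule.span ℝ {Mmat d hd 1} := by
      apply le_antisymm
      · rintro S hS
        rw [Submodule.mem_inf] at hS
        obtain ⟨hS1, hS2⟩ := hS
        obtain ⟨hsym, hdiag, hrow⟩ := hS1
        have hS3 := structure_lemma hd S hsym hdiag hrow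
          (fun σ ha hb => hS2 σ ⟨ha, hb⟩)
        rw [Submodule.mem_span_singleton]
        exact ⟨S ⟨d - 2, by omega⟩ ⟨d - 1, by omega⟩, by rw [← Mmat_smul hd _, ← hS3]⟩
      · rw [Submodule.span_le, Set.singleton_subset_iff]
        refine Submodule.mem_inf.mpr ⟨Mmat_mem_Sd3 hd 1, fun σ hσ => ?_⟩
        exact Mmat_invariant hd 1 σ hσ.1 hσ.2
    rw [key]
    apply finrank_span_singleton
    intro h
    have h2 := congrFun (congrFun h ⟨d - 2, by omega⟩) ⟨d - 1, by omega⟩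
    rw [Mmat_pq] at h2
    simpa using h2
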